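/- Let G be a finite group with |G| > 1 and let C be a transitive inverse-closed generating set of G. Then C ∩ Φ(G;C) = ∅. -/

import Mathlib

namespace NETCayley

variable {G : Type*} [Group G]

/-- `Aut(G;C)`: the subgroup of `MulAut G` consisting of automorphisms `σ` with `C^σ = C`. -/
def autSub (C : Set G) : Subgroup (MulAut G) where
  carrier := {σ : MulAut G | ⇑σ '' C = C}
  one_mem' := by simp
  mul_mem' := by
    intro a b ha hb
    rw [Set.mem_setOf_eq] at ha hb ⊢
    have h : ⇑(a * b) = ⇑a ∘ ⇑b := rfl
    rw [h, Set.image_comp, hb, ha]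
  inv_mem' := by
    intro a ha
    rw [Set.mem_setOf_eq] at ha ⊢
    conv_lhs => rw [← ha]
    rw [← Set.image_comp]
    have h : ⇑a⁻¹ ∘ ⇑a = id := by funext x; simp
    rw [h, Set.image_id]

/-- `A(G;C)`: proper normal `Aut(G;C)`-invariant subgroups of `G`. -/
def setA (C : Set G) : Set (Subgroup G) :=
  {N | N.Normal ∧ N ≠ ⊤ ∧ ∀ σ ∈ autSub C, N.map (σ : MulAut G).toMonoidHom = N}

/-- `A_max(G;C)`: maximal (by inclusion) elements of `A(G;C)`. -/
def setAmax (C : Set G) : Set (Subgroup G) :=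
  {N | N ∈ setA C ∧ ∀ M ∈ setA C, N ≤ M → N = M}

/-- `Φ(G;C)`: the intersection of all members of `A_max(G;C)`. -/
def PhiC (C : Set G) : Subgroup G := sInf (setAmax C)

/-- `X` is normal `C`-closed: `(x^g)^σ ∈ X` for all `x ∈ X`, `g ∈ G`, `σ ∈ Aut(G;C)`. -/
def NormalCClosed (C X : Set G) : Prop :=
  ∀ x ∈ X, ∀ g : G, ∀ σ ∈ autSub C, σ (g⁻¹ * x * g) ∈ X

/-- The normal `C`-closure of `X`: `{(x^g)^σ : x ∈ X, g ∈ G, σ ∈ Aut(G;C)}`. -/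
def normalCClosure (C X : Set G) : Set G :=
  {y | ∃ x ∈ X, ∃ g : G, ∃ σ ∈ autSub C, σ (g⁻¹ * x * g) = y}

/-- The orbit of `c` under the natural action of `Aut(G;C)`. -/
def orbitC (C : Set G) (c : G) : Set G := {y | ∃ σ ∈ autSub C, σ c = y}

/-- `C` is a transitive set: either `Aut(G;C)` is transitive on `C`, or there are exactly two
orbits `C₊`, `C₋` on `C` with `C = C₊ ∪ C₋` and `C₋ = C₊⁻¹`. -/
def TransSet (C : Set G) : Prop :=
  (∀ c ∈ C, ∀ c' ∈ C, ∃ σ ∈ autSub C, σ c = c') ∨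
  (∃ cp ∈ C, ∃ cm ∈ C, orbitC C cp ≠ orbitC C cm ∧
    C = orbitC C cp ∪ orbitC C cm ∧ orbitC C cm = (orbitC C cp)⁻¹)

/-- A transitive inverse-closed generating set of `G`. -/
def IsTransGenSet (C : Set G) : Prop :=
  (1 : G) ∉ C ∧ (∀ c ∈ C, c⁻¹ ∈ C) ∧ Subgroup.closure C = ⊤ ∧ TransSet C


lemma mem_of_setA {C : Set G} {N : Subgroup G} (hN : N ∈ setA C)
    {σ : MulAut G} (hσ : σ ∈ autSub C) {x : G} (hx : x ∈ N) : σ x ∈ N := by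
  have h := hN.2.2 σ hσ
  rw [← h]
  exact ⟨x, hx, rfl⟩

lemma orbit_subset_of_mem {C : Set G} {N : Subgroup G} (hN : N ∈ setA C)
    {z x : G} (hx : x ∈ orbitC C z) (hxN : x ∈ N) : orbitC C z ⊆ N := by
  obtain ⟨σ, hσ, hσz⟩ := hx
  have hz : z ∈ N := by
    have := mem_of_setA hN ((autSub C).inv_mem hσ) hxN
    rwa [← hσz, show σ⁻¹ (σ z) = z from σ.symm_apply_apply z] at this
  rintro y ⟨τ, hτ, rfl⟩
  exact mem_of_setA hN hτ hz

/-- If `C` is a transitive inverse-closed generating set of `G`,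
then `C ∩ Φ(G;C) = ∅`. -/
theorem stmt4 {G : Type*} [Group G] [Finite G] [Nontrivial G] (C : Set G)
    (hC : IsTransGenSet C) :
    C ∩ (PhiC C : Set G) = ∅ := by
  obtain ⟨h1, hinv, hgen, htrans⟩ := hC
  rw [Set.eq_empty_iff_forall_notMem]
  rintro x ⟨hxC, hxPhi⟩
  -- find a maximal element of setA C
  have hbot : (⊥ : Subgroup G) ∈ setA C := by
    refine ⟨inferInstance, bot_ne_top, fun σ _ => ?_⟩
    simp
  obtain ⟨N, hN, hNmax⟩ := Set.Finite.exists_maximalFor id (setA C)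
    (Set.toFinite _) ⟨⊥, hbot⟩
  have hNA : N ∈ setAmax C := ⟨hN, fun M hM hle => le_antisymm hle (hNmax hM hle)⟩
  have hxN : x ∈ N := by
    have : PhiC C ≤ N := sInf_le hNA
    exact this hxPhi
  -- show C ⊆ N
  have hCN : C ⊆ (N : Set G) := by
    rcases htrans with htr | ⟨cp, hcp, cm, hcm, _, hCeq, hminv⟩
    · intro c' hc'
      obtain ⟨σ, hσ, hσx⟩ := htr x hxC c' hc'
      exact hσx ▸ mem_of_setA hN hσ hxN
    · have key : orbitC C cp ⊆ (N : Set G) ∧ orbitC C cm ⊆ (N : Set G) := by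
        have hx' := hCeq ▸ hxC
        rcases hx' with hx' | hx'
        · have hp := orbit_subset_of_mem hN hx' hxN
          refine ⟨hp, fun w hw => ?_⟩
          rw [hminv, Set.mem_inv] at hw
          exact (N.inv_mem_iff).mp (hp hw)
        · have hm := orbit_subset_of_mem hN hx' hxN
          refine ⟨fun w hw => ?_, hm⟩
          have : w⁻¹ ∈ orbitC C cm := by
            rw [hminv, Set.mem_inv, inv_inv]; exact hw
          exact (N.inv_mem_iff).mp (hm this)
      rw [hCeq]
      exact Set.union_subset key.1 key.2
  have : (⊤ : Subgroup G) ≤ N := hgen ▸ (Subgroup.closure_le N).mpr hCN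
  exact hN.2.1 (top_le_iff.mp this)

end NETCayley
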